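/- Let p : ℝ² → ℝ and let φ, ψ : ℝ² → ℂ be differentiable functions satisfying ∂φ/∂y (x,y) = p(x,y)·ψ(x,y) and ∂ψ/∂x (x,y) = p(x,y)·φ(x,y) for all (x,y) ∈ ℝ². Define E₁, E₂ : ℝ² → ℝ³ by E₁ = (Re(φ²), −Im(φ²), |φ|²) and E₂ = (Re(ψ²), −Im(ψ²), |ψ|²). Then: (a) for all (x,y), ∂E₁/∂y (x,y) = ∂E₂/∂x (x,y), i.e. the ℝ³-valued 1-form E₁ dx + E₂ dy is closed; and (b) Q(E₁(x,y)) = 0 and Q(E₂(x,y)) = 0 for all (x,y), where Q(v) = v₁² + v₂² − v₃². -/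

import Mathlib

lemma key_fderiv (f : ℝ × ℝ → ℂ) (hf : Differentiable ℝ f) (q v : ℝ × ℝ) :
    fderiv ℝ (fun q => (((f q) ^ 2).re, -((f q) ^ 2).im, ‖f q‖ ^ 2)) q v =
      (2 * ((f q).re * (fderiv ℝ f q v).re - (f q).im * (fderiv ℝ f q v).im),
       -(2 * ((f q).re * (fderiv ℝ f q v).im + (f q).im * (fderiv ℝ f q v).re)),
       2 * ((f q).re * (fderiv ℝ f q v).re + (f q).im * (fderiv ℝ f q v).im)) := by
  have hf' : HasFDerivAt f (fderiv ℝ f q) q := (hf q).hasFDerivAt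
  set D := fderiv ℝ f q with hD
  have hsq : HasFDerivAt (fun q => (f q) ^ 2) ((f q • D) + (f q • D)) q := by
    have := hf'.mul hf'; simp only [pow_two]; exact this
  have hre : HasFDerivAt (fun q => ((f q) ^ 2).re)
      (Complex.reCLM.comp ((f q • D) + (f q • D))) q :=
    Complex.reCLM.hasFDerivAt.comp q hsq
  have him : HasFDerivAt (fun q => -((f q) ^ 2).im)
      (-(Complex.imCLM.comp ((f q • D) + (f q • D)))) q :=
    (Complex.imCLM.hasFDerivAt.comp q hsq).neg
  have hre0 : HasFDerivAt (fun q => (f q).re) (Complex.reCLM.comp D) q :=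
    Complex.reCLM.hasFDerivAt.comp q hf'
  have him0 : HasFDerivAt (fun q => (f q).im) (Complex.imCLM.comp D) q :=
    Complex.imCLM.hasFDerivAt.comp q hf'
  have habs : HasFDerivAt (fun q => ‖f q‖ ^ 2)
      (((f q).re • (Complex.reCLM.comp D) + (f q).re • (Complex.reCLM.comp D)) +
       ((f q).im • (Complex.imCLM.comp D) + (f q).im • (Complex.imCLM.comp D))) q := by
    have h1 := hre0.mul hre0
    have h2 := him0.mul him0
    have := h1.add h2
    simp only [Complex.sq_norm, Complex.normSq_apply]
    exact this
  have htot := hre.prodMk (him.prodMk habs)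
  have hfd := htot.fderiv
  rw [hfd]
  simp [ContinuousLinearMap.prod_apply, Complex.mul_re, Complex.mul_im]
  refine ⟨by ring, by ring, by ring⟩

/-- Closedness and isotropy of the ℝ³-valued 1-form E₁ dx + E₂ dy built from a
solution of the Dirac equation, underlying the Weierstrass representation of time-like
surfaces in ℝ^{2,1}. -/
theorem weierstrass_R21_closed_isotropic
    (p : ℝ × ℝ → ℝ) (φ ψ : ℝ × ℝ → ℂ)
    (hφdiff : Differentiable ℝ φ) (hψdiff : Differentiable ℝ ψ)
    (hφ : ∀ x y : ℝ, fderiv ℝ φ (x, y) (0, 1) = (p (x, y) : ℂ) * ψ (x, y))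
    (hψ : ∀ x y : ℝ, fderiv ℝ ψ (x, y) (1, 0) = (p (x, y) : ℂ) * φ (x, y))
    (E₁ E₂ : ℝ × ℝ → ℝ × ℝ × ℝ)
    (hE₁ : ∀ x y : ℝ, E₁ (x, y) =
      (((φ (x, y)) ^ 2).re, -((φ (x, y)) ^ 2).im, ‖φ (x, y)‖ ^ 2))
    (hE₂ : ∀ x y : ℝ, E₂ (x, y) =
      (((ψ (x, y)) ^ 2).re, -((ψ (x, y)) ^ 2).im, ‖ψ (x, y)‖ ^ 2)) :
    ∀ x y : ℝ,
      fderiv ℝ E₁ (x, y) (0, 1) = fderiv ℝ E₂ (x, y) (1, 0) ∧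
      (E₁ (x, y)).1 ^ 2 + (E₁ (x, y)).2.1 ^ 2 - (E₁ (x, y)).2.2 ^ 2 = 0 ∧
      (E₂ (x, y)).1 ^ 2 + (E₂ (x, y)).2.1 ^ 2 - (E₂ (x, y)).2.2 ^ 2 = 0 := by
  have hE₁' : E₁ = fun q => (((φ q) ^ 2).re, -((φ q) ^ 2).im, ‖φ q‖ ^ 2) := by
    funext q; obtain ⟨x, y⟩ := q; exact hE₁ x y
  have hE₂' : E₂ = fun q => (((ψ q) ^ 2).re, -((ψ q) ^ 2).im, ‖ψ q‖ ^ 2) := by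
    funext q; obtain ⟨x, y⟩ := q; exact hE₂ x y
  intro x y
  refine ⟨?_, ?_, ?_⟩
  · rw [hE₁', hE₂', key_fderiv φ hφdiff (x, y) (0, 1), key_fderiv ψ hψdiff (x, y) (1, 0),
      hφ x y, hψ x y]
    simp [Complex.mul_re, Complex.mul_im]
    refine ⟨by ring, by ring, by ring⟩
  · rw [hE₁ x y]
    have : ((φ (x, y)) ^ 2).re ^ 2 + ((φ (x, y)) ^ 2).im ^ 2 = ‖φ (x, y)‖ ^ 4 := by
      rw [show ∀ z : ℂ, z.re ^ 2 + z.im ^ 2 = Complex.normSq z from fun z => by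
        rw [Complex.normSq_apply]; ring, ← Complex.sq_norm, norm_pow]; ring
    simp only []
    nlinarith [this]
  · rw [hE₂ x y]
    have : ((ψ (x, y)) ^ 2).re ^ 2 + ((ψ (x, y)) ^ 2).im ^ 2 = ‖ψ (x, y)‖ ^ 4 := by
      rw [show ∀ z : ℂ, z.re ^ 2 + z.im ^ 2 = Complex.normSq z from fun z => by
        rw [Complex.normSq_apply]; ring, ← Complex.sq_norm, norm_pow]; ring
    simp only []
    nlinarith [this]
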